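/- Let M ≥ 1 be an integer, set N = 2M−1 and ξ = cos(π/(2M)) = cos(π/(N+1)). Then for every integer n with 0 ≤ n ≤ N−1, (sin²(π/(2M))/(Mπ)) · ∫_{−1}^{1} (T_M(x)/(x−ξ))² T_n(x) (1−x²)^{−1/2} dx = ((N−n+1)/(N+1)) cos(πn/(N+1)) + (1/(N+1)) cot(π/(N+1)) sin(πn/(N+1)). -/

import Mathlib

open Real

/-- Chebyshev polynomials of the first kind. -/
noncomputable def chebT : ℕ → ℝ → ℝ
  | 0 => fun _ => 1
  | 1 => fun x => x
  | n + 2 => fun x => 2 * x * chebT (n + 1) x - chebT n x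

/-- Chebyshev polynomials of the second kind. -/
noncomputable def chebU : ℕ → ℝ → ℝ
  | 0 => fun _ => 1
  | 1 => fun x => 2 * x
  | n + 2 => fun x => 2 * x * chebU (n + 1) x - chebU n x

/-- Chebyshev polynomials of the third kind. -/
noncomputable def chebV : ℕ → ℝ → ℝ
  | 0 => fun _ => 1
  | 1 => fun x => 2 * x - 1
  | n + 2 => fun x => 2 * x * chebV (n + 1) x - chebV n x

/-- Chebyshev polynomials of the fourth kind. -/
noncomputable def chebW : ℕ → ℝ → ℝ
  | 0 => fun _ => 1
  | 1 => fun x => 2 * x + 1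
  | n + 2 => fun x => 2 * x * chebW (n + 1) x - chebW n x


lemma sin_add_sin' (x y : ℝ) :
    Real.sin x + Real.sin y = 2 * Real.sin ((x + y) / 2) * Real.cos ((x - y) / 2) := by
  have h := Real.sin_sub_sin x (-y)
  rw [show x - -y = x + y by ring, show x + -y = x - y by ring, Real.sin_neg] at h
  linarith

lemma trig1 (a b x y : ℝ) :
    2 * (Real.cos y - Real.cos x) * (Real.sin (a + x) * Real.cos (b + y)) =
      (Real.sin (a + x) * Real.cos (b + y + y) - Real.sin (a + x + x) * Real.cos (b + y)) -
        (Real.sin a * Real.cos (b + y) - Real.sin (a + x) * Real.cos b) := by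
  have h1 : Real.cos (b + y + y) + Real.cos b = 2 * Real.cos (b + y) * Real.cos y := by
    rw [Real.cos_add_cos, show (b + y + y + b) / 2 = b + y by ring,
      show (b + y + y - b) / 2 = y by ring]
  have h2 : Real.sin (a + x + x) + Real.sin a = 2 * Real.sin (a + x) * Real.cos x := by
    rw [sin_add_sin', show (a + x + x + a) / 2 = a + x by ring,
      show (a + x + x - a) / 2 = x by ring]
  linear_combination (-Real.sin (a + x)) * h1 + Real.cos (b + y) * h2

lemma trig2 (a b x y : ℝ) :
    2 * (Real.cos y - Real.cos x) * (Real.sin (a + x) * Real.sin (b + y)) =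
      (Real.sin (a + x) * Real.sin (b + y + y) - Real.sin (a + x + x) * Real.sin (b + y)) -
        (Real.sin a * Real.sin (b + y) - Real.sin (a + x) * Real.sin b) := by
  have h1 : Real.sin (b + y + y) + Real.sin b = 2 * Real.sin (b + y) * Real.cos y := by
    rw [sin_add_sin', show (b + y + y + b) / 2 = b + y by ring,
      show (b + y + y - b) / 2 = y by ring]
  have h2 : Real.sin (a + x + x) + Real.sin a = 2 * Real.sin (a + x) * Real.cos x := by
    rw [sin_add_sin', show (a + x + x + a) / 2 = a + x by ring,
      show (a + x + x - a) / 2 = x by ring]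
  linear_combination (-Real.sin (a + x)) * h1 + Real.sin (b + y) * h2

lemma trig3 (p q t : ℝ) :
    2 * Real.sin t * (2 * (Real.sin (p + q + t) * Real.sin (p + t))) =
      2 * Real.sin t * Real.cos q -
        (Real.sin (p + p + q + t + t + t) - Real.sin (p + p + q + t)) := by
  have h1 : Real.cos q - Real.cos (p + p + q + t + t) =
      -2 * Real.sin (p + q + t) * Real.sin (-(p + t)) := by
    rw [Real.cos_sub_cos, show (q + (p + p + q + t + t)) / 2 = p + q + t by ring,
      show (q - (p + p + q + t + t)) / 2 = -(p + t) by ring]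
  have h2 : Real.sin (p + p + q + t + t + t) - Real.sin (p + p + q + t) =
      2 * Real.sin t * Real.cos (p + p + q + t + t) := by
    rw [Real.sin_sub_sin, show (p + p + q + t + t + t - (p + p + q + t)) / 2 = t by ring,
      show (p + p + q + t + t + t + (p + p + q + t)) / 2 = p + p + q + t + t by ring]
  rw [Real.sin_neg] at h1
  linear_combination (-2 * Real.sin t) * h1 + h2

lemma chebT_cos (θ : ℝ) : ∀ k : ℕ, chebT k (Real.cos θ) = Real.cos (k * θ)
  | 0 => by simp [chebT]
  | 1 => by simp [chebT]
  | (k + 2) => by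
    show 2 * Real.cos θ * chebT (k + 1) (Real.cos θ) - chebT k (Real.cos θ) = _
    rw [chebT_cos θ (k + 1), chebT_cos θ k]
    push_cast
    rw [show ((k : ℝ) + 2) * θ = ((k : ℝ) + 1) * θ + θ by ring,
        show (k : ℝ) * θ = ((k : ℝ) + 1) * θ - θ by ring, Real.cos_add, Real.cos_sub]
    ring

lemma int_cos_int (m : ℤ) : ∫ θ in (0:ℝ)..π, Real.cos (m * θ) = if m = 0 then π else 0 := by
  rcases eq_or_ne m 0 with rfl | hm
  · simp
  · have hm' : (m : ℝ) ≠ 0 := Int.cast_ne_zero.mpr hm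
    have hd : ∀ x ∈ Set.uIcc (0:ℝ) π,
        HasDerivAt (fun θ : ℝ => Real.sin (m * θ) / m) (Real.cos (m * x)) x := by
      intro x _
      have h1 : HasDerivAt (fun θ : ℝ => (m : ℝ) * θ) ((m : ℝ) * 1) x :=
        (hasDerivAt_id x).const_mul (m : ℝ)
      have h2 := ((Real.hasDerivAt_sin ((m : ℝ) * x)).comp x h1).div_const (m : ℝ)
      rw [mul_one, mul_div_cancel_right₀ _ hm'] at h2
      exact h2
    rw [intervalIntegral.integral_eq_sub_of_hasDerivAt hd
      (Continuous.intervalIntegrable (by continuity) _ _)]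
    simp [hm, Real.sin_int_mul_pi]

lemma orth (a b : ℤ) : ∫ θ in (0:ℝ)..π, Real.cos (a * θ) * Real.cos (b * θ) =
    π / 2 * ((if a = b then 1 else 0) + (if a = -b then 1 else 0)) := by
  have key : ∀ θ ∈ Set.uIcc (0:ℝ) π, Real.cos (a * θ) * Real.cos (b * θ) =
      (Real.cos (((a - b : ℤ) : ℝ) * θ) + Real.cos (((a + b : ℤ) : ℝ) * θ)) / 2 := by
    intro θ _
    push_cast
    rw [show ((a : ℝ) - b) * θ = a * θ - b * θ by ring,
        show ((a : ℝ) + b) * θ = a * θ + b * θ by ring, Real.cos_sub, Real.cos_add]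
    ring
  rw [intervalIntegral.integral_congr key, intervalIntegral.integral_div,
    intervalIntegral.integral_add (Continuous.intervalIntegrable (by continuity) _ _)
      (Continuous.intervalIntegrable (by continuity) _ _),
    int_cos_int, int_cos_int]
  simp only [sub_eq_zero, add_eq_zero_iff_eq_neg]
  split_ifs <;> ring

lemma sumC (N : ℕ) (θ₀ θ : ℝ) (h : ((N : ℝ) + 1) * θ₀ = π) :
    2 * (Real.cos θ - Real.cos θ₀) *
      ∑ k ∈ Finset.range N, Real.sin (((k : ℝ) + 1) * θ₀) * Real.cos (((k : ℝ) + 1) * θ) =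
    Real.sin θ₀ * (1 + Real.cos (((N : ℝ) + 1) * θ)) := by
  set u : ℕ → ℝ := fun m =>
    Real.sin ((m : ℝ) * θ₀) * Real.cos (((m : ℝ) + 1) * θ)
      - Real.sin (((m : ℝ) + 1) * θ₀) * Real.cos ((m : ℝ) * θ) with hu
  have key : ∀ k ∈ Finset.range N,
      2 * (Real.cos θ - Real.cos θ₀) *
        (Real.sin (((k : ℝ) + 1) * θ₀) * Real.cos (((k : ℝ) + 1) * θ)) = u (k + 1) - u k := by
    intro k _
    simp only [hu]
    push_cast
    rw [show ((k : ℝ) + 1) * θ₀ = (k : ℝ) * θ₀ + θ₀ by ring,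
        show ((k : ℝ) + 1 + 1) * θ₀ = (k : ℝ) * θ₀ + θ₀ + θ₀ by ring,
        show ((k : ℝ) + 1) * θ = (k : ℝ) * θ + θ by ring,
        show ((k : ℝ) + 1 + 1) * θ = (k : ℝ) * θ + θ + θ by ring]
    linear_combination trig1 ((k : ℝ) * θ₀) ((k : ℝ) * θ) θ₀ θ
  rw [Finset.mul_sum, Finset.sum_congr rfl key, Finset.sum_range_sub u N]
  simp only [hu]
  have h1 : (N : ℝ) * θ₀ = π - θ₀ := by linarith
  rw [h1, h, Real.sin_pi_sub, Real.sin_pi]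
  simp
  ring

lemma sumS (N : ℕ) (θ₀ θ : ℝ) (h : ((N : ℝ) + 1) * θ₀ = π) :
    2 * (Real.cos θ - Real.cos θ₀) *
      ∑ k ∈ Finset.range N, Real.sin (((k : ℝ) + 1) * θ₀) * Real.sin (((k : ℝ) + 1) * θ) =
    Real.sin θ₀ * Real.sin (((N : ℝ) + 1) * θ) := by
  set u : ℕ → ℝ := fun m =>
    Real.sin ((m : ℝ) * θ₀) * Real.sin (((m : ℝ) + 1) * θ)
      - Real.sin (((m : ℝ) + 1) * θ₀) * Real.sin ((m : ℝ) * θ) with hu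
  have key : ∀ k ∈ Finset.range N,
      2 * (Real.cos θ - Real.cos θ₀) *
        (Real.sin (((k : ℝ) + 1) * θ₀) * Real.sin (((k : ℝ) + 1) * θ)) = u (k + 1) - u k := by
    intro k _
    simp only [hu]
    push_cast
    rw [show ((k : ℝ) + 1) * θ₀ = (k : ℝ) * θ₀ + θ₀ by ring,
        show ((k : ℝ) + 1 + 1) * θ₀ = (k : ℝ) * θ₀ + θ₀ + θ₀ by ring,
        show ((k : ℝ) + 1) * θ = (k : ℝ) * θ + θ by ring,
        show ((k : ℝ) + 1 + 1) * θ = (k : ℝ) * θ + θ + θ by ring]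
    linear_combination trig2 ((k : ℝ) * θ₀) ((k : ℝ) * θ) θ₀ θ
  rw [Finset.mul_sum, Finset.sum_congr rfl key, Finset.sum_range_sub u N]
  simp only [hu]
  have h1 : (N : ℝ) * θ₀ = π - θ₀ := by linarith
  rw [h1, h, Real.sin_pi_sub, Real.sin_pi]
  simp

lemma sumT (N n K : ℕ) (θ₀ : ℝ) (h : ((N : ℝ) + 1) * θ₀ = π) (hK : n + K = N) :
    2 * Real.sin θ₀ *
        (2 * ∑ k ∈ Finset.range K,
          Real.sin (((k : ℝ) + (n : ℝ) + 1) * θ₀) * Real.sin (((k : ℝ) + 1) * θ₀)) =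
      2 * Real.sin θ₀ * ((K : ℝ) * Real.cos ((n : ℝ) * θ₀)) +
        2 * Real.sin (((n : ℝ) + 1) * θ₀) := by
  set w : ℕ → ℝ := fun m => Real.sin ((2 * (m : ℝ) + 1 + (n : ℝ)) * θ₀) with hw
  have key : ∀ k ∈ Finset.range K,
      2 * Real.sin θ₀ *
        (2 * (Real.sin (((k : ℝ) + (n : ℝ) + 1) * θ₀) * Real.sin (((k : ℝ) + 1) * θ₀))) =
      2 * Real.sin θ₀ * Real.cos ((n : ℝ) * θ₀) - (w (k + 1) - w k) := by
    intro k _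
    simp only [hw]
    push_cast
    rw [show ((k : ℝ) + (n : ℝ) + 1) * θ₀ = (k : ℝ) * θ₀ + (n : ℝ) * θ₀ + θ₀ by ring,
        show ((k : ℝ) + 1) * θ₀ = (k : ℝ) * θ₀ + θ₀ by ring,
        show (2 * ((k : ℝ) + 1) + 1 + (n : ℝ)) * θ₀ =
          (k : ℝ) * θ₀ + (k : ℝ) * θ₀ + (n : ℝ) * θ₀ + θ₀ + θ₀ + θ₀ by ring,
        show (2 * (k : ℝ) + 1 + (n : ℝ)) * θ₀ =
          (k : ℝ) * θ₀ + (k : ℝ) * θ₀ + (n : ℝ) * θ₀ + θ₀ by ring]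
    linear_combination trig3 ((k : ℝ) * θ₀) ((n : ℝ) * θ₀) θ₀
  have hsum : 2 * Real.sin θ₀ *
      (2 * ∑ k ∈ Finset.range K,
        Real.sin (((k : ℝ) + (n : ℝ) + 1) * θ₀) * Real.sin (((k : ℝ) + 1) * θ₀)) =
      ∑ k ∈ Finset.range K,
        (2 * Real.sin θ₀ * Real.cos ((n : ℝ) * θ₀) - (w (k + 1) - w k)) := by
    rw [← Finset.sum_congr rfl key, Finset.mul_sum, Finset.mul_sum]
  rw [hsum, Finset.sum_sub_distrib, Finset.sum_range_sub w K, Finset.sum_const,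
    Finset.card_range]
  have hw0 : w 0 = Real.sin (((n : ℝ) + 1) * θ₀) := by
    simp only [hw]
    push_cast
    ring_nf
  have hwK : w K = -Real.sin (((n : ℝ) + 1) * θ₀) := by
    simp only [hw]
    have hKR : (K : ℝ) + (n : ℝ) = (N : ℝ) := by
      exact_mod_cast (show (K + n : ℕ) = N by omega)
    have h2 : (2 * (K : ℝ) + 1 + (n : ℝ)) * θ₀ = 2 * π - ((n : ℝ) + 1) * θ₀ := by
      linear_combination 2 * h + 2 * θ₀ * hKR
    rw [h2, Real.sin_sub, Real.sin_two_pi, Real.cos_two_pi]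
    ring
  rw [hw0, hwK]
  push_cast
  ring

lemma intCS (N n K : ℕ) (hK : n + K = N) (f : ℕ → ℝ) :
    ∫ θ in (0:ℝ)..π,
      ((∑ k ∈ Finset.range N, f k * Real.cos (((k:ℝ)+1)*θ))^2 +
       (∑ k ∈ Finset.range N, f k * Real.sin (((k:ℝ)+1)*θ))^2) * Real.cos ((n:ℝ)*θ)
    = π * ∑ k ∈ Finset.range K, f (k + n) * f k := by
  have hpt : ∀ θ : ℝ,
      ((∑ k ∈ Finset.range N, f k * Real.cos (((k:ℝ)+1)*θ))^2 +
       (∑ k ∈ Finset.range N, f k * Real.sin (((k:ℝ)+1)*θ))^2) * Real.cos ((n:ℝ)*θ)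
      = ∑ j ∈ Finset.range N, ∑ k ∈ Finset.range N,
          f j * f k * (Real.cos (((j:ℝ)-(k:ℝ))*θ) * Real.cos ((n:ℝ)*θ)) := by
    intro θ
    rw [sq, sq, Finset.sum_mul_sum, Finset.sum_mul_sum, ← Finset.sum_add_distrib,
      Finset.sum_mul]
    apply Finset.sum_congr rfl
    intro j _
    rw [← Finset.sum_add_distrib, Finset.sum_mul]
    apply Finset.sum_congr rfl
    intro k _
    rw [show ((j:ℝ)-(k:ℝ))*θ = ((j:ℝ)+1)*θ - ((k:ℝ)+1)*θ by ring, Real.cos_sub]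
    ring
  rw [intervalIntegral.integral_congr (fun θ _ => hpt θ)]
  rw [intervalIntegral.integral_finset_sum (fun j _ =>
    Continuous.intervalIntegrable (continuous_finset_sum _ (fun k _ => by fun_prop)) _ _)]
  have horth : ∀ j k : ℕ,
      (∫ θ in (0:ℝ)..π, Real.cos (((j:ℝ)-(k:ℝ))*θ) * Real.cos ((n:ℝ)*θ))
      = π/2 * ((if (j:ℤ) - (k:ℤ) = (n:ℤ) then (1:ℝ) else 0) +
               (if (j:ℤ) - (k:ℤ) = -(n:ℤ) then (1:ℝ) else 0)) := by
    intro j k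
    have h := orth ((j:ℤ) - (k:ℤ)) (n:ℤ)
    push_cast at h
    exact h
  have h1 : ∀ j ∈ Finset.range N,
      (∫ θ in (0:ℝ)..π, ∑ k ∈ Finset.range N,
        f j * f k * (Real.cos (((j:ℝ)-(k:ℝ))*θ) * Real.cos ((n:ℝ)*θ)))
      = ∑ k ∈ Finset.range N,
          (π/2 * (f j * f k * (if (j:ℤ) - (k:ℤ) = (n:ℤ) then (1:ℝ) else 0)) +
           π/2 * (f j * f k * (if (j:ℤ) - (k:ℤ) = -(n:ℤ) then (1:ℝ) else 0))) := by
    intro j _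
    rw [intervalIntegral.integral_finset_sum (fun k _ =>
      Continuous.intervalIntegrable (by fun_prop) _ _)]
    apply Finset.sum_congr rfl
    intro k _
    rw [intervalIntegral.integral_const_mul, horth j k]
    ring
  rw [Finset.sum_congr rfl h1]
  simp only [Finset.sum_add_distrib]
  simp only [← Finset.mul_sum]
  have hA2 : ∑ j ∈ Finset.range N, ∑ k ∈ Finset.range N,
      f j * f k * (if (j:ℤ) - (k:ℤ) = -(n:ℤ) then (1:ℝ) else 0)
      = ∑ j ∈ Finset.range N, ∑ k ∈ Finset.range N,
      f j * f k * (if (j:ℤ) - (k:ℤ) = (n:ℤ) then (1:ℝ) else 0) := by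
    rw [Finset.sum_comm]
    apply Finset.sum_congr rfl
    intro j _
    apply Finset.sum_congr rfl
    intro k _
    have hcond : ((k:ℤ) - (j:ℤ) = -(n:ℤ)) ↔ ((j:ℤ) - (k:ℤ) = (n:ℤ)) := by omega
    rw [if_congr hcond rfl rfl]
    ring
  have hA1 : ∑ j ∈ Finset.range N, ∑ k ∈ Finset.range N,
      f j * f k * (if (j:ℤ) - (k:ℤ) = (n:ℤ) then (1:ℝ) else 0)
      = ∑ k ∈ Finset.range K, f (k + n) * f k := by
    rw [Finset.sum_comm]
    have inner : ∀ k ∈ Finset.range N,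
        (∑ j ∈ Finset.range N, f j * f k * (if (j:ℤ) - (k:ℤ) = (n:ℤ) then (1:ℝ) else 0))
        = if k + n ∈ Finset.range N then f (k+n) * f k else 0 := by
      intro k _
      rw [← Finset.sum_ite_eq' (Finset.range N) (k+n) (fun j => f j * f k)]
      apply Finset.sum_congr rfl
      intro j _
      have hcond : ((j:ℤ) - (k:ℤ) = (n:ℤ)) ↔ (j = k + n) := by omega
      rw [if_congr hcond rfl rfl]
      split_ifs with h
      · ring
      · ring
    rw [Finset.sum_congr rfl inner]
    rw [← Finset.sum_subset (Finset.range_subset_range.mpr (by omega : K ≤ N))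
      (fun x _ hx => by
        rw [if_neg]
        simp only [Finset.mem_range] at *
        omega)]
    apply Finset.sum_congr rfl
    intro k hk
    simp only [Finset.mem_range] at hk
    rw [if_pos]
    simp only [Finset.mem_range]
    omega
  rw [hA2, hA1]
  ring

/-- The Jackson damping factors: the optimal damping factors for `α = β = -1/2`
(Chebyshev polynomials of the first kind) in explicit trigonometric form.
Here `N = 2M - 1` and `ξ = cos(π/(2M)) = cos(π/(N+1))`. -/
theorem jackson_damping_factors (M : ℕ) (hM : 1 ≤ M) (n : ℕ) (hn : n ≤ 2 * M - 1 - 1) :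
    Real.sin (π / (2 * M)) ^ 2 / (M * π) *
        ∫ x in (-1:ℝ)..1,
          (chebT M x / (x - Real.cos (π / (2 * M)))) ^ 2 * chebT n x *
            (1 - x ^ 2) ^ (-(1/2) : ℝ) =
      ((2 * (M : ℝ) - 1) - n + 1) / ((2 * (M : ℝ) - 1) + 1) *
          Real.cos (π * n / ((2 * (M : ℝ) - 1) + 1)) +
        Real.cot (π / ((2 * (M : ℝ) - 1) + 1)) / ((2 * (M : ℝ) - 1) + 1) *
          Real.sin (π * n / ((2 * (M : ℝ) - 1) + 1)) := by
  have hπ := Real.pi_pos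
  have hM1 : (1:ℝ) ≤ (M:ℝ) := by exact_mod_cast hM
  set θ₀ : ℝ := π / (2 * M) with hθ₀def
  have hθ₀pos : 0 < θ₀ := by rw [hθ₀def]; positivity
  have hθ₀lt : θ₀ < π := by
    rw [hθ₀def, div_lt_iff₀ (by positivity)]
    nlinarith
  have hs0 : 0 < Real.sin θ₀ := Real.sin_pos_of_pos_of_lt_pi hθ₀pos hθ₀lt
  set N : ℕ := 2 * M - 1 with hNdef
  have hNc : ((N:ℝ) + 1) = 2 * (M:ℝ) := by
    rw [hNdef, Nat.cast_sub (by omega : 1 ≤ 2*M)]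
    push_cast
    ring
  have hpiN : ((N:ℝ) + 1) * θ₀ = π := by
    rw [hNc, hθ₀def]
    field_simp
  set K : ℕ := N - n with hKdef
  have hKN : n + K = N := by omega
  set f : ℕ → ℝ := fun k => Real.sin (((k:ℝ)+1) * θ₀) with hfdef
  -- Step 1: change of variables x = cos θ
  have himg : Real.cos '' Set.Icc 0 π = Set.Icc (-1:ℝ) 1 := by
    apply Set.Subset.antisymm
    · rintro y ⟨x, _, rfl⟩
      exact ⟨Real.neg_one_le_cos x, Real.cos_le_one x⟩
    · have h := intermediate_value_Icc' hπ.le Real.continuous_cos.continuousOn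
      rw [Real.cos_pi, Real.cos_zero] at h
      exact h
  have hI1 : (∫ x in (-1:ℝ)..1,
        (chebT M x / (x - Real.cos θ₀)) ^ 2 * chebT n x * (1 - x ^ 2) ^ (-(1/2) : ℝ))
      = ∫ θ in (0:ℝ)..π, |(-Real.sin θ)| *
          ((chebT M (Real.cos θ) / (Real.cos θ - Real.cos θ₀)) ^ 2 * chebT n (Real.cos θ) *
            (1 - (Real.cos θ) ^ 2) ^ (-(1/2) : ℝ)) := by
    rw [intervalIntegral.integral_of_le (by norm_num : (-1:ℝ) ≤ 1),
        intervalIntegral.integral_of_le hπ.le,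
        ← MeasureTheory.integral_Icc_eq_integral_Ioc,
        ← MeasureTheory.integral_Icc_eq_integral_Ioc, ← himg,
        MeasureTheory.integral_image_eq_integral_abs_deriv_smul measurableSet_Icc
          (fun x _ => (Real.hasDerivAt_cos x).hasDerivWithinAt) Real.injOn_cos]
    simp only [smul_eq_mul]
  -- Step 2: a.e. rewriting of the integrand
  have hI2 : (∫ θ in (0:ℝ)..π, |(-Real.sin θ)| *
          ((chebT M (Real.cos θ) / (Real.cos θ - Real.cos θ₀)) ^ 2 * chebT n (Real.cos θ) *
            (1 - (Real.cos θ) ^ 2) ^ (-(1/2) : ℝ)))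
      = ∫ θ in (0:ℝ)..π, (Real.sin θ₀ ^ 2)⁻¹ *
          (((∑ k ∈ Finset.range N, f k * Real.cos (((k:ℝ)+1)*θ))^2 +
            (∑ k ∈ Finset.range N, f k * Real.sin (((k:ℝ)+1)*θ))^2) * Real.cos ((n:ℝ)*θ)) := by
    apply intervalIntegral.integral_congr_ae
    have hnull : ∀ᵐ θ : ℝ, θ ∉ ({θ₀, π} : Set ℝ) := by
      rw [← MeasureTheory.measure_eq_zero_iff_ae_notMem]
      exact ((Set.finite_singleton π).insert θ₀).measure_zero _
    filter_upwards [hnull] with θ hθ hmem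
    have hθ1 : θ ≠ θ₀ := fun e => hθ (by simp [e])
    have hθ2 : θ ≠ π := fun e => hθ (by simp [e])
    rw [Set.uIoc_of_le hπ.le] at hmem
    have hθpos : 0 < θ := hmem.1
    have hθltπ : θ < π := lt_of_le_of_ne hmem.2 hθ2
    have hsθ : 0 < Real.sin θ := Real.sin_pos_of_pos_of_lt_pi hθpos hθltπ
    have hcosne : Real.cos θ - Real.cos θ₀ ≠ 0 :=
      sub_ne_zero.mpr (fun e => hθ1 (Real.injOn_cos ⟨hθpos.le, hθltπ.le⟩ ⟨hθ₀pos.le, hθ₀lt.le⟩ e))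
    have hw : ((1 : ℝ) - Real.cos θ ^ 2) ^ (-(1/2) : ℝ) = (Real.sin θ)⁻¹ := by
      rw [show (1 : ℝ) - Real.cos θ ^ 2 = Real.sin θ ^ 2 by
          nlinarith [Real.sin_sq_add_cos_sq θ]]
      rw [Real.rpow_neg (sq_nonneg _), ← Real.sqrt_eq_rpow, Real.sqrt_sq_eq_abs,
        abs_of_pos hsθ]
    rw [chebT_cos θ M, chebT_cos θ n, hw, abs_neg, abs_of_pos hsθ]
    have hc := sumC N θ₀ θ hpiN
    have hs := sumS N θ₀ θ hpiN
    rw [hNc, show (2*(M:ℝ))*θ = 2*((M:ℝ)*θ) by ring, Real.cos_two_mul] at hc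
    rw [hNc, show (2*(M:ℝ))*θ = 2*((M:ℝ)*θ) by ring, Real.sin_two_mul] at hs
    simp only [hfdef]
    set Cv : ℝ := ∑ k ∈ Finset.range N,
      Real.sin (((k:ℝ)+1)*θ₀) * Real.cos (((k:ℝ)+1)*θ) with hCv
    set Sv : ℝ := ∑ k ∈ Finset.range N,
      Real.sin (((k:ℝ)+1)*θ₀) * Real.sin (((k:ℝ)+1)*θ) with hSv
    have e1 : (Real.cos θ - Real.cos θ₀) * Cv = Real.sin θ₀ * Real.cos ((M:ℝ)*θ) ^ 2 := by
      linear_combination hc / 2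
    have e2 : (Real.cos θ - Real.cos θ₀) * Sv
        = Real.sin θ₀ * (Real.sin ((M:ℝ)*θ) * Real.cos ((M:ℝ)*θ)) := by
      linear_combination hs / 2
    have hpy := Real.sin_sq_add_cos_sq ((M:ℝ)*θ)
    have key : Cv ^ 2 + Sv ^ 2
        = Real.sin θ₀ ^ 2 * (Real.cos ((M:ℝ)*θ) / (Real.cos θ - Real.cos θ₀)) ^ 2 := by
      rw [div_pow, ← mul_div_assoc, eq_div_iff (pow_ne_zero 2 hcosne)]
      linear_combination ((Real.cos θ - Real.cos θ₀) * Cv + Real.sin θ₀ * Real.cos ((M:ℝ)*θ) ^ 2) * e1 +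
        ((Real.cos θ - Real.cos θ₀) * Sv + Real.sin θ₀ * (Real.sin ((M:ℝ)*θ) * Real.cos ((M:ℝ)*θ))) * e2 +
        (Real.sin θ₀ ^ 2 * Real.cos ((M:ℝ)*θ) ^ 2) * hpy
    rw [key]
    field_simp
  -- Step 3: the integral of the nice function
  have hI3 : (∫ θ in (0:ℝ)..π, (Real.sin θ₀ ^ 2)⁻¹ *
          (((∑ k ∈ Finset.range N, f k * Real.cos (((k:ℝ)+1)*θ))^2 +
            (∑ k ∈ Finset.range N, f k * Real.sin (((k:ℝ)+1)*θ))^2) * Real.cos ((n:ℝ)*θ)))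
      = (Real.sin θ₀ ^ 2)⁻¹ * (π * ∑ k ∈ Finset.range K, f (k + n) * f k) := by
    rw [intervalIntegral.integral_const_mul, intCS N n K hKN f]
  -- Step 4: assembly
  have hTT : ∑ k ∈ Finset.range K, f (k + n) * f k
      = ∑ k ∈ Finset.range K,
          Real.sin (((k : ℝ) + (n : ℝ) + 1) * θ₀) * Real.sin (((k : ℝ) + 1) * θ₀) := by
    apply Finset.sum_congr rfl
    intro k _
    simp only [hfdef]
    push_cast
    ring_nf
  have hsum := sumT N n K θ₀ hpiN hKN
  rw [show ((n:ℝ)+1)*θ₀ = (n:ℝ)*θ₀ + θ₀ by ring, Real.sin_add] at hsum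
  have hKc : (K:ℝ) = 2*(M:ℝ) - 1 - n := by
    have h1 : ((n:ℝ)) + K = N := by exact_mod_cast hKN
    linarith [hNc]
  rw [hI1, hI2, hI3, hTT]
  rw [Real.cot_eq_cos_div_sin,
    show (2*(M:ℝ)-1)+1 = 2*(M:ℝ) by ring,
    show π / (2*(M:ℝ)) = θ₀ from hθ₀def.symm,
    show π * (n:ℝ) / (2*(M:ℝ)) = (n:ℝ)*θ₀ by rw [hθ₀def]; ring]
  set T : ℝ := ∑ k ∈ Finset.range K,
    Real.sin (((k : ℝ) + (n : ℝ) + 1) * θ₀) * Real.sin (((k : ℝ) + 1) * θ₀) with hT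
  rw [hKc] at hsum
  have hMne : (M:ℝ) ≠ 0 := by positivity
  have hs0' : Real.sin θ₀ ≠ 0 := ne_of_gt hs0
  have hπ' : π ≠ 0 := ne_of_gt hπ
  have hL : Real.sin θ₀ ^ 2 / ((M:ℝ) * π) * ((Real.sin θ₀ ^ 2)⁻¹ * (π * T)) = T / (M:ℝ) := by
    field_simp
  have hT4 : T = (2*(M:ℝ) - 1 - (n:ℝ)) * Real.cos ((n:ℝ)*θ₀) / 2 +
      Real.sin ((n:ℝ)*θ₀) * Real.cos θ₀ / (2 * Real.sin θ₀) + Real.cos ((n:ℝ)*θ₀) / 2 := by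
    field_simp
    linear_combination hsum / 2
  rw [hL, hT4]
  field_simp
  ring
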